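/- Let S = ⟨r₁,…,r_k⟩ with r₁ < ⋯ < r_k and d = gcd(r₁,…,r_k), and n > r_k² with gcd(n,d) = 1 and dn ∈ S. Then the elements of Ap(S; dn) are pairwise distinct modulo n, and hence so are the elements {i + m_S(i)·n : i ∈ Ap(S; dn)}. -/
import Mathlib


open scoped Classical

/-- Membership in the additive submonoid of `ℕ` generated by `r 0, …, r (k-1)`. -/
def memGen {k : ℕ} (r : Fin k → ℕ) (a : ℕ) : Prop :=
  ∃ z : Fin k → ℕ, a = ∑ i, z i * r i

/-- The Apéry set `Ap(S; x) = {m ∈ S : m - x ∉ S}` (subtraction in `ℤ`,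
encoded by the guard `x ≤ m`). -/
def aperySet {k : ℕ} (r : Fin k → ℕ) (x : ℕ) : Set ℕ :=
  {m | memGen r m ∧ ¬(x ≤ m ∧ memGen r (m - x))}

/-- The set of factorization lengths of `a` in the monoid generated by `r`. -/
def lenSet {k : ℕ} (r : Fin k → ℕ) (a : ℕ) : Set ℕ :=
  {ℓ | ∃ z : Fin k → ℕ, a = ∑ i, z i * r i ∧ ℓ = ∑ i, z i}

/-- The minimum factorization length of `a` in the monoid generated by `r`. -/
noncomputable def minLen {k : ℕ} (r : Fin k → ℕ) (a : ℕ) : ℕ :=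
  sInf (lenSet r a)

/-- The generators `n, n + r 0, …, n + r (k-1)` of the shifted monoid `M_n`. -/
def shiftGen {k : ℕ} (n : ℕ) (r : Fin k → ℕ) : Fin (k + 1) → ℕ :=
  Fin.cons n (fun i => n + r i)

/-- The genus: the number of gaps of the monoid generated by `r`. -/
noncomputable def genus {k : ℕ} (r : Fin k → ℕ) : ℕ :=
  Set.ncard {m : ℕ | ¬ memGen r m}

/-- The Frobenius number: the largest gap of the monoid generated by `r`. -/
noncomputable def frob {k : ℕ} (r : Fin k → ℕ) : ℕ :=
  sSup {m : ℕ | ¬ memGen r m}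

/-- The set of pseudo-Frobenius numbers of the monoid generated by `r`. -/
def pseudoFrob {k : ℕ} (r : Fin k → ℕ) : Set ℕ :=
  {m | ¬ memGen r m ∧ ∀ x : ℕ, memGen r x → 0 < x → memGen r (m + x)}

/-- For `n > r_k²` with `gcd(n,d) = 1` and `dn ∈ S`, the elements of
`Ap(S; dn)` are pairwise distinct modulo `n`, and hence so are the elements
`{i + m_S(i)·n : i ∈ Ap(S; dn)}`. -/

lemma memGen_add {k : ℕ} {r : Fin k → ℕ} {a b : ℕ} (ha : memGen r a)
    (hb : memGen r b) : memGen r (a + b) := by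
  obtain ⟨z, hz⟩ := ha
  obtain ⟨w, hw⟩ := hb
  exact ⟨z + w, by simp [hz, hw, add_mul, Finset.sum_add_distrib]⟩

lemma memGen_mul {k : ℕ} {r : Fin k → ℕ} {a : ℕ} (ha : memGen r a) (t : ℕ) :
    memGen r (t * a) := by
  induction t with
  | zero => exact ⟨0, by simp⟩
  | succ t ih => rw [Nat.succ_mul]; exact memGen_add ih ha

lemma dvd_of_memGen {k : ℕ} {r : Fin k → ℕ} {a : ℕ}
    (ha : memGen r a) : (Finset.univ.gcd r) ∣ a := by
  obtain ⟨z, hz⟩ := ha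
  rw [hz]
  exact Finset.dvd_sum fun i _ => Dvd.dvd.mul_left (Finset.gcd_dvd (Finset.mem_univ i)) _

lemma apery_mod_eq {k : ℕ} {r : Fin k → ℕ} {d n a b : ℕ}
    (hd : d = Finset.univ.gcd r) (hgcd : Nat.gcd n d = 1) (hdn : memGen r (d * n))
    (ha : a ∈ aperySet r (d * n)) (hb : b ∈ aperySet r (d * n))
    (hle : a ≤ b) (hab : a % n = b % n) : a = b := by
  have hnd : n ∣ b - a := (Nat.modEq_iff_dvd' hle).mp hab
  have hdd : d ∣ b - a := Nat.dvd_sub (hd ▸ dvd_of_memGen hb.1) (hd ▸ dvd_of_memGen ha.1)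
  have hdnd : d * n ∣ b - a :=
    Nat.Coprime.mul_dvd_of_dvd_of_dvd (Nat.coprime_comm.mp hgcd) hdd hnd
  obtain ⟨t, ht⟩ := hdnd
  by_contra hne
  obtain ⟨u, rfl⟩ : ∃ u, t = u + 1 := by
    refine ⟨t - 1, ?_⟩
    rcases Nat.eq_zero_or_pos t with h | h
    · exact absurd (Nat.le_antisymm hle (Nat.le_of_sub_eq_zero (by simp [ht, h]))) hne
    · omega
  have hm : d * n * (u + 1) = d * n * u + d * n := by ring
  refine hb.2 ⟨by omega, ?_⟩
  have hbd : b - d * n = a + d * n * u := by omega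
  rw [hbd, mul_comm (d * n) u]
  exact memGen_add ha.1 (memGen_mul hdn u)

theorem apery_distinct_mod {k : ℕ} (r : Fin (k + 1) → ℕ)
    (hmono : StrictMono r) (hpos : 0 < r 0)
    (d : ℕ) (hd : d = Finset.univ.gcd r)
    (n : ℕ) (hn : n > (r (Fin.last k)) ^ 2)
    (hgcd : Nat.gcd n d = 1) (hdn : memGen r (d * n)) :
    Set.InjOn (· % n) (aperySet r (d * n)) ∧
      Set.InjOn (fun i => (i + minLen r i * n) % n) (aperySet r (d * n)) := by

  have key : Set.InjOn (· % n) (aperySet r (d * n)) := by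
    intro a ha b hb hab
    rcases le_total a b with h | h
    · exact apery_mod_eq hd hgcd hdn ha hb h hab
    · exact (apery_mod_eq hd hgcd hdn hb ha h hab.symm).symm
  refine ⟨key, ?_⟩
  intro a ha b hb hab
  simp only [Nat.add_mul_mod_self_right] at hab
  exact key ha hb hab
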